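/- For every ε > 0 there is a δ > 0 such that: whenever A and B are bounded linear operators on a complex Banach space satisfying ‖sin A‖ ≤ 1 − δ, ‖sin B‖ ≤ 1, Arcsin(sin A) = A, Arcsin(sin B) = B, and ‖sin A − sin B‖ ≤ δ, then ‖A − B‖ ≤ ε. The choice of δ is uniform over all complex Banach spaces. -/

import Mathlib

open scoped ENNReal NNReal

noncomputable section

/-- `sin A := ∑_{j≥0} ((−1)^j/(2j+1)!) A^{2j+1}` for a bounded operator `A`. -/
def opSin {E : Type*} [NormedAddCommGroup E] [NormedSpace ℂ E]
    (A : E →L[ℂ] E) : E →L[ℂ] E :=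
  ∑' j : ℕ, ((-1 : ℂ) ^ j / (Nat.factorial (2 * j + 1) : ℂ)) • A ^ (2 * j + 1)

/-- The Maclaurin coefficients of arcsin: `c_j = (2j)! / (4^j (j!)^2 (2j+1)) ≥ 0`. -/
def arcsinCoeff (j : ℕ) : ℝ :=
  (Nat.factorial (2 * j) : ℝ) / (4 ^ j * (Nat.factorial j : ℝ) ^ 2 * (2 * j + 1))

/-- `Arcsin v := ∑_{j≥0} c_j v^{2j+1}` for a bounded operator `v` (absolutely convergent
when `‖v‖ ≤ 1`). -/
def opArcsin {E : Type*} [NormedAddCommGroup E] [NormedSpace ℂ E]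
    (v : E →L[ℂ] E) : E →L[ℂ] E :=
  ∑' j : ℕ, (arcsinCoeff j : ℂ) • v ^ (2 * j + 1)

lemma arcsinCoeff_nonneg (j : ℕ) : 0 ≤ arcsinCoeff j := by
  unfold arcsinCoeff; positivity

/-- `b_j = c_j (2j+1) = (2j)!/(4^j (j!)^2)`, the central binomial coefficient over `4^j`. -/
def bCoeff (j : ℕ) : ℝ := arcsinCoeff j * (2 * j + 1)

lemma bCoeff_eq (j : ℕ) :
    bCoeff j = (Nat.factorial (2 * j) : ℝ) / (4 ^ j * (Nat.factorial j : ℝ) ^ 2) := by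
  unfold bCoeff arcsinCoeff
  have h1 : (0:ℝ) < 4 ^ j * (Nat.factorial j : ℝ) ^ 2 := by positivity
  have h2 : (0:ℝ) < 2 * j + 1 := by positivity
  field_simp

lemma bCoeff_nonneg (j : ℕ) : 0 ≤ bCoeff j := by
  rw [bCoeff_eq]; positivity

lemma bCoeff_succ (j : ℕ) : bCoeff (j + 1) * (2 * j + 2) = bCoeff j * (2 * j + 1) := by
  rw [bCoeff_eq, bCoeff_eq]
  have h2 : 2 * (j + 1) = (2 * j + 1) + 1 := by ring
  rw [h2, Nat.factorial_succ, Nat.factorial_succ, Nat.factorial_succ, pow_succ]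
  have h3 : (0:ℝ) < 4 ^ j * (Nat.factorial j : ℝ) ^ 2 := by positivity
  have h4 : (0:ℝ) < (Nat.factorial j : ℝ) := Nat.cast_pos.2 (Nat.factorial_pos j)
  push_cast
  field_simp
  ring

lemma bCoeff_succ_le (j : ℕ) : bCoeff (j + 1) ≤ bCoeff j := by
  have h := bCoeff_succ j
  have hb := bCoeff_nonneg j
  have hb' := bCoeff_nonneg (j + 1)
  nlinarith [Nat.cast_nonneg (α := ℝ) j]

lemma bCoeff_zero : bCoeff 0 = 1 := by
  rw [bCoeff_eq]; norm_num [Nat.factorial]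

lemma bCoeff_le_one (j : ℕ) : bCoeff j ≤ 1 := by
  induction j with
  | zero => rw [bCoeff_zero]
  | succ n ih => exact (bCoeff_succ_le n).trans ih

lemma arcsinCoeff_le (j : ℕ) : arcsinCoeff j ≤ 2 * (bCoeff j - bCoeff (j + 1)) := by
  have h := bCoeff_succ j
  have hb := bCoeff_nonneg j
  have ha : arcsinCoeff j * (2 * j + 1) = bCoeff j := rfl
  have hj : (0:ℝ) ≤ (j:ℝ) := Nat.cast_nonneg j
  have ha0 := arcsinCoeff_nonneg j
  nlinarith [mul_nonneg hb hj, mul_nonneg ha0 hj]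

lemma summable_arcsinCoeff : Summable arcsinCoeff := by
  have htel : Summable (fun j => bCoeff j - bCoeff (j + 1)) := by
    apply summable_of_sum_range_le (c := bCoeff 0)
      (fun n => sub_nonneg.2 (bCoeff_succ_le n))
    intro n
    rw [Finset.sum_range_sub' bCoeff n]
    have := bCoeff_nonneg n
    linarith
  exact Summable.of_nonneg_of_le arcsinCoeff_nonneg arcsinCoeff_le (htel.mul_left 2)

lemma opNorm_pow_le_one {E : Type*} [NormedAddCommGroup E] [NormedSpace ℂ E]
    (u : E →L[ℂ] E) (hu : ‖u‖ ≤ 1) (n : ℕ) : ‖u ^ n‖ ≤ 1 := by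
  induction n with
  | zero =>
      rw [pow_zero]
      exact (ContinuousLinearMap.norm_id_le).trans_eq' rfl
  | succ n ih =>
      rw [pow_succ]
      calc ‖u ^ n * u‖ ≤ ‖u ^ n‖ * ‖u‖ := norm_mul_le _ _
        _ ≤ 1 * 1 := mul_le_mul ih hu (norm_nonneg _) zero_le_one
        _ = 1 := one_mul 1

lemma opNorm_pow_sub_pow_le {E : Type*} [NormedAddCommGroup E] [NormedSpace ℂ E]
    (u v : E →L[ℂ] E) (hu : ‖u‖ ≤ 1) (hv : ‖v‖ ≤ 1) (n : ℕ) :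
    ‖u ^ n - v ^ n‖ ≤ n * ‖u - v‖ := by
  induction n with
  | zero => simp
  | succ n ih =>
      have key : u ^ (n + 1) - v ^ (n + 1) = u ^ n * (u - v) + (u ^ n - v ^ n) * v := by
        rw [pow_succ, pow_succ]; noncomm_ring
      rw [key]
      have h1 : ‖u ^ n * (u - v)‖ ≤ ‖u - v‖ := by
        calc ‖u ^ n * (u - v)‖ ≤ ‖u ^ n‖ * ‖u - v‖ := norm_mul_le _ _
          _ ≤ 1 * ‖u - v‖ :=
              mul_le_mul_of_nonneg_right (opNorm_pow_le_one u hu n) (norm_nonneg _)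
          _ = ‖u - v‖ := one_mul _
      have h2 : ‖(u ^ n - v ^ n) * v‖ ≤ n * ‖u - v‖ := by
        calc ‖(u ^ n - v ^ n) * v‖ ≤ ‖u ^ n - v ^ n‖ * ‖v‖ := norm_mul_le _ _
          _ ≤ ‖u ^ n - v ^ n‖ * 1 := mul_le_mul_of_nonneg_left hv (norm_nonneg _)
          _ = ‖u ^ n - v ^ n‖ := mul_one _
          _ ≤ n * ‖u - v‖ := ih
      calc ‖u ^ n * (u - v) + (u ^ n - v ^ n) * v‖
          ≤ ‖u ^ n * (u - v)‖ + ‖(u ^ n - v ^ n) * v‖ := norm_add_le _ _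
        _ ≤ ‖u - v‖ + n * ‖u - v‖ := add_le_add h1 h2
        _ = (n + 1 : ℕ) * ‖u - v‖ := by push_cast; ring

lemma norm_coe_smul {E : Type*} [NormedAddCommGroup E] [NormedSpace ℂ E]
    (c : ℝ) (hc : 0 ≤ c) (T : E →L[ℂ] E) : ‖(c:ℂ) • T‖ = c * ‖T‖ := by
  have h : ‖(c:ℂ) • T‖ = ‖(c:ℂ)‖ * ‖T‖ := by exact_mod_cast norm_smul (c:ℂ) T
  rw [h, Complex.norm_real, Real.norm_eq_abs, abs_of_nonneg hc]

/-- For all `ε > 0` there is some `δ > 0`, uniform over all complex Banach spaces, such that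
whenever `A` and `B` are bounded operators satisfying `‖sin A‖ ≤ 1 − δ`, `‖sin B‖ ≤ 1`,
`Arcsin(sin A) = A`, `Arcsin(sin B) = B` and `‖sin A − sin B‖ ≤ δ`, then `‖A − B‖ ≤ ε`. -/
theorem opArcsin_opSin_uniform_continuity :
    ∀ ε : ℝ, 0 < ε → ∃ δ : ℝ, 0 < δ ∧
      ∀ (E : Type u) [NormedAddCommGroup E] [NormedSpace ℂ E] [CompleteSpace E]
        (A B : E →L[ℂ] E),
        ‖opSin A‖ ≤ 1 - δ → ‖opSin B‖ ≤ 1 →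
        opArcsin (opSin A) = A → opArcsin (opSin B) = B →
        ‖opSin A - opSin B‖ ≤ δ → ‖A - B‖ ≤ ε := by
  intro ε hε
  obtain ⟨N, hN⟩ : ∃ N : ℕ, ∑' j : ℕ, arcsinCoeff (j + N) ≤ ε / 8 := by
    have h := tendsto_sum_nat_add arcsinCoeff
    have h2 : ∀ᶠ (i : ℕ) in Filter.atTop, (∑' j : ℕ, arcsinCoeff (j + i)) < ε / 8 :=
      h.eventually_lt_const (by positivity)
    exact ⟨h2.exists.choose, h2.exists.choose_spec.le⟩
  set δ : ℝ := ε / (2 * (N + 1)) with hδdef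
  have hδ : 0 < δ := by positivity
  refine ⟨δ, hδ, ?_⟩
  intro E _ _ _ A B hA hB hArcA hArcB hAB
  set u := opSin A with hu_def
  set v := opSin B with hv_def
  have hu1 : ‖u‖ ≤ 1 := hA.trans (by linarith)
  have hv1 : ‖v‖ ≤ 1 := hB
  have hsum := summable_arcsinCoeff
  have hfu : Summable (fun j : ℕ => (arcsinCoeff j : ℂ) • u ^ (2 * j + 1)) := by
    refine Summable.of_norm_bounded hsum (fun j => ?_)
    rw [norm_coe_smul _ (arcsinCoeff_nonneg j)]
    calc arcsinCoeff j * ‖u ^ (2 * j + 1)‖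
        ≤ arcsinCoeff j * 1 :=
          mul_le_mul_of_nonneg_left (opNorm_pow_le_one u hu1 _) (arcsinCoeff_nonneg j)
      _ = arcsinCoeff j := mul_one _
  have hfv : Summable (fun j : ℕ => (arcsinCoeff j : ℂ) • v ^ (2 * j + 1)) := by
    refine Summable.of_norm_bounded hsum (fun j => ?_)
    rw [norm_coe_smul _ (arcsinCoeff_nonneg j)]
    calc arcsinCoeff j * ‖v ^ (2 * j + 1)‖
        ≤ arcsinCoeff j * 1 :=
          mul_le_mul_of_nonneg_left (opNorm_pow_le_one v hv1 _) (arcsinCoeff_nonneg j)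
      _ = arcsinCoeff j := mul_one _
  have key : A - B =
      ∑' j : ℕ, (arcsinCoeff j : ℂ) • (u ^ (2 * j + 1) - v ^ (2 * j + 1)) := by
    conv_lhs => rw [← hArcA, ← hArcB]
    rw [opArcsin, opArcsin, ← Summable.tsum_sub hfu hfv]
    exact tsum_congr fun j => (smul_sub _ _ _).symm
  set g : ℕ → ℝ := fun j => arcsinCoeff j * ‖u ^ (2 * j + 1) - v ^ (2 * j + 1)‖ with hg_def
  have hnorm_eq : ∀ j : ℕ,
      ‖(arcsinCoeff j : ℂ) • (u ^ (2 * j + 1) - v ^ (2 * j + 1))‖ = g j := fun j => by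
    rw [hg_def, norm_coe_smul _ (arcsinCoeff_nonneg j)]
  have hg_nonneg : ∀ j, 0 ≤ g j := fun j =>
    mul_nonneg (arcsinCoeff_nonneg j) (norm_nonneg _)
  have hg_le : ∀ j, g j ≤ 2 * arcsinCoeff j := fun j => by
    have h1 : ‖u ^ (2 * j + 1) - v ^ (2 * j + 1)‖ ≤ 2 := by
      calc ‖u ^ (2 * j + 1) - v ^ (2 * j + 1)‖
          ≤ ‖u ^ (2 * j + 1)‖ + ‖v ^ (2 * j + 1)‖ := norm_sub_le _ _
        _ ≤ 1 + 1 := add_le_add (opNorm_pow_le_one u hu1 _) (opNorm_pow_le_one v hv1 _)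
        _ = 2 := by norm_num
    calc g j ≤ arcsinCoeff j * 2 :=
          mul_le_mul_of_nonneg_left h1 (arcsinCoeff_nonneg j)
      _ = 2 * arcsinCoeff j := mul_comm _ _
  have hg_sum : Summable g :=
    Summable.of_nonneg_of_le hg_nonneg hg_le (hsum.mul_left 2)
  have hg_term : ∀ j : ℕ, g j ≤ bCoeff j * δ := fun j => by
    have h1 : ‖u ^ (2 * j + 1) - v ^ (2 * j + 1)‖ ≤ (2 * j + 1) * δ := by
      calc ‖u ^ (2 * j + 1) - v ^ (2 * j + 1)‖
          ≤ (2 * j + 1 : ℕ) * ‖u - v‖ := opNorm_pow_sub_pow_le u v hu1 hv1 _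
        _ ≤ (2 * j + 1 : ℕ) * δ := by
            exact mul_le_mul_of_nonneg_left hAB (by positivity)
        _ = (2 * (j:ℝ) + 1) * δ := by push_cast; ring
    calc g j ≤ arcsinCoeff j * ((2 * (j:ℝ) + 1) * δ) :=
          mul_le_mul_of_nonneg_left h1 (arcsinCoeff_nonneg j)
      _ = bCoeff j * δ := by rw [bCoeff]; ring
  have front : ∑ j ∈ Finset.range N, g j ≤ ε / 2 := by
    have h1 : ∑ j ∈ Finset.range N, g j ≤ ∑ j ∈ Finset.range N, δ := by
      refine Finset.sum_le_sum fun j _ => ?_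
      calc g j ≤ bCoeff j * δ := hg_term j
        _ ≤ 1 * δ := mul_le_mul_of_nonneg_right (bCoeff_le_one j) hδ.le
        _ = δ := one_mul _
    rw [Finset.sum_const, Finset.card_range, nsmul_eq_mul] at h1
    refine h1.trans ?_
    rw [hδdef]
    have hN1 : (N:ℝ) ≤ N + 1 := by linarith
    have hpos : (0:ℝ) < N + 1 := by positivity
    calc (N:ℝ) * (ε / (2 * (N + 1))) ≤ ((N:ℝ) + 1) * (ε / (2 * (N + 1))) :=
          mul_le_mul_of_nonneg_right hN1 (by positivity)
      _ = ε / 2 := by field_simp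
  have tail : ∑' j : ℕ, g (j + N) ≤ ε / 4 := by
    have hgs : Summable (fun j : ℕ => g (j + N)) := (summable_nat_add_iff N).2 hg_sum
    have hcs : Summable (fun j : ℕ => 2 * arcsinCoeff (j + N)) :=
      ((summable_nat_add_iff N).2 hsum).mul_left 2
    calc ∑' j : ℕ, g (j + N) ≤ ∑' j : ℕ, 2 * arcsinCoeff (j + N) :=
          Summable.tsum_le_tsum (fun j => hg_le (j + N)) hgs hcs
      _ = 2 * ∑' j : ℕ, arcsinCoeff (j + N) := tsum_mul_left
      _ ≤ 2 * (ε / 8) := by linarith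
      _ = ε / 4 := by ring
  calc ‖A - B‖
      = ‖∑' j : ℕ, (arcsinCoeff j : ℂ) • (u ^ (2 * j + 1) - v ^ (2 * j + 1))‖ := by
        rw [key]
    _ ≤ ∑' j : ℕ, ‖(arcsinCoeff j : ℂ) • (u ^ (2 * j + 1) - v ^ (2 * j + 1))‖ :=
        norm_tsum_le_tsum_norm (hg_sum.congr fun j => (hnorm_eq j).symm)
    _ = ∑' j : ℕ, g j := tsum_congr hnorm_eq
    _ = ∑ j ∈ Finset.range N, g j + ∑' j : ℕ, g (j + N) :=
        (hg_sum.sum_add_tsum_nat_add N).symm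
    _ ≤ ε / 2 + ε / 4 := add_le_add front tail
    _ ≤ ε := by linarith
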